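/- Let u ∈ B with δ_{2,u} ≥ 2, set d = det(−A), and for v ∈ V_{1,u} set m_v = d·(E*_v)_u (these are positive integers). Then the rational function Π_{v∈V_{1,u}} (1 − t^{m_v})^{δ_v − 2}, where δ_v is the valency of v in T, is a polynomial with integer coefficients, and its degree equals Σ_{v∈V_{1,u}} (δ_v − 2)·m_v. -/

import Mathlib

open Matrix

open scoped Classical

noncomputable section

namespace Plumbing

variable {V : Type*} [Fintype V] [DecidableEq V]

/-- The rational matrix associated with the integral intersection matrix. -/
def Aq (A : Matrix V V ℤ) : Matrix V V ℚ := A.map fun n => (n : ℚ)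

/-- Negative definiteness of the intersection form. -/
def NegDef (A : Matrix V V ℤ) : Prop :=
  ∀ x : V → ℚ, x ≠ 0 → x ⬝ᵥ (Aq A).mulVec x < 0

/-- The dual base element `E*_v`, the `v`-th column of `−A⁻¹`. -/
def Estar (A : Matrix V V ℤ) (v : V) : V → ℚ := fun w => (-(Aq A)⁻¹) w v

/-- Membership in the dual lattice `L' = {x ∈ ℚ^V : Ax ∈ ℤ^V}`. -/
def memLp (A : Matrix V V ℤ) (x : V → ℚ) : Prop :=
  ∀ v, ∃ n : ℤ, (Aq A).mulVec x v = (n : ℚ)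

/-- `x` and `y` are in the same class of `H = L'/L`, i.e. `x - y ∈ L`. -/
def sameClass {W : Type*} (x y : W → ℚ) : Prop := ∀ w, ∃ n : ℤ, x w - y w = (n : ℚ)

/-- The valency of a vertex. -/
def deg {W : Type*} (G : SimpleGraph W) (w : W) : ℕ := (G.neighborSet w).ncard

/-- The coefficients `c_v(k)`. -/
def ccoef (d k : ℕ) : ℤ :=
  if 2 ≤ d then (-1 : ℤ) ^ k * (Nat.choose (d - 2) k) else (Nat.choose (k + 1 - d) k)

/-- The coefficient `z(l')` of the multivariable series `Z(t)`. -/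
def zcoef (A : Matrix V V ℤ) (δ : V → ℕ) (l' : V → ℚ) : ℤ :=
  ∑ᶠ k : V → ℕ,
    if (∑ v, (k v : ℚ) • Estar A v) = l' then ∏ v, ccoef (δ v) (k v) else 0

/-- The counting function `Q_{[x]}(x)`. -/
def Qcount (A : Matrix V V ℤ) (δ : V → ℕ) (x : V → ℚ) : ℤ :=
  ∑ᶠ l' : V → ℚ,
    if memLp A l' ∧ sameClass l' x ∧ ¬ x ≤ l' then zcoef A δ l' else 0

/-- The counting function `Q_{[x],I}(x)` of the reduced series. -/
def QcountI (A : Matrix V V ℤ) (δ : V → ℕ) (I : Set V) (x : V → ℚ) : ℤ :=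
  ∑ᶠ l' : V → ℚ,
    if memLp A l' ∧ sameClass l' x ∧ ¬ (∀ v ∈ I, x v ≤ l' v) then zcoef A δ l' else 0

/-- The counting function `Q_{0,I}(x)` on the integral lattice. -/
def QcountI0 (A : Matrix V V ℤ) (δ : V → ℕ) (I : Set V) (x : V → ℤ) : ℤ :=
  ∑ᶠ l : V → ℤ,
    if ¬ (∀ v ∈ I, x v ≤ l v) then zcoef A δ (fun v => (l v : ℚ)) else 0

/-- The modified counting function `q_{[x],J}(x)`. -/
def qmod (A : Matrix V V ℤ) (δ : V → ℕ) (J : Set V) (x : V → ℚ) : ℤ :=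
  ∑ᶠ l' : V → ℚ,
    if memLp A l' ∧ sameClass l' x ∧ (∀ v ∈ J, l' v < x v) then zcoef A δ l' else 0

/-- The coefficient function of the reduced series `Z(t_W)`. -/
def zred (A : Matrix V V ℤ) (δ : V → ℕ) (W : Set V) (y : W → ℚ) : ℤ :=
  ∑ᶠ l' : V → ℚ, if (fun w : W => l' w.1) = y then zcoef A δ l' else 0

/-- The intersection matrix of a full subgraph. -/
def subM (A : Matrix V V ℤ) (W : Set V) : Matrix W W ℤ :=
  A.submatrix Subtype.val Subtype.val

/-- The restriction operator `j*_W : L'(T) → L'(T(W))`. -/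
def jstar (A : Matrix V V ℤ) (W : Set V) (l' : V → ℚ) : W → ℚ :=
  (Aq (subM A W))⁻¹.mulVec fun w => (Aq A).mulVec l' w.1

/-- The canonical cycle `K`, the unique solution of `(K + E_v, E_v) = -2`. -/
def Kcan (A : Matrix V V ℤ) : V → ℚ :=
  (Aq A)⁻¹.mulVec fun v => (-2 : ℚ) - (A v v : ℚ)

/-- The Riemann–Roch expression `χ(x) = -(x, x + K)/2`. -/
def chi (A : Matrix V V ℤ) (x : V → ℚ) : ℚ :=
  -(x ⬝ᵥ (Aq A).mulVec (x + Kcan A)) / 2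

/-- The weight `w(l, J)` of the lattice cube `(l, J)`. -/
def wcube (A : Matrix V V ℤ) (l : V → ℤ) (J : Finset V) : ℚ :=
  J.powerset.sup' ⟨∅, Finset.empty_mem_powerset J⟩
    fun J' => chi A fun v => (l v : ℚ) + if v ∈ J' then 1 else 0

/-- Quasipolynomials on `ℤ^W`: polynomial on each coset of a finite index subgroup. -/
def IsQuasiPoly {W : Type*} [Fintype W] (Q : (W → ℤ) → ℚ) : Prop :=
  ∃ Λ : AddSubgroup (W → ℤ), Λ.index ≠ 0 ∧
    ∀ c : W → ℤ, ∃ p : MvPolynomial W ℚ,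
      ∀ l ∈ Λ, Q (c + l) = MvPolynomial.eval (fun w => ((c + l) w : ℚ)) p

/-- The vertex set of the connected component `c` of the complement of `I`. -/
def compSet (G : SimpleGraph V) (I : Set V) (c : (G.induce Iᶜ).ConnectedComponent) :
    Set V :=
  {v : V | ∃ h : v ∈ (Iᶜ : Set V), (G.induce Iᶜ).connectedComponentMk ⟨v, h⟩ = c}

/-- The boundary of a subset `V2` of the vertices. -/
def Bdry (G : SimpleGraph V) (V2 : Set V) : Set V :=
  {u ∈ V2 | ∃ w, w ∉ V2 ∧ G.Adj u w}

/-- `V_{1,u}` : the vertex `u` together with the vertex sets of all connected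
components of the complement of `V2` adjacent to `u`. -/
def V1u (G : SimpleGraph V) (V2 : Set V) (u : V) : Set V :=
  insert u {v : V | ∃ h : v ∈ (V2ᶜ : Set V), ∃ w, ∃ hw : w ∈ (V2ᶜ : Set V),
    G.Adj u w ∧ (G.induce V2ᶜ).connectedComponentMk ⟨v, h⟩ =
      (G.induce V2ᶜ).connectedComponentMk ⟨w, hw⟩}

end Plumbing

open Plumbing

open Polynomial Matrix

lemma my_prod_zpow {K : Type*} [Field K] {ι : Type*} (s : Finset ι) (a : K) (ha : a ≠ 0)
    (f : ι → ℤ) : ∏ v ∈ s, a ^ (f v) = a ^ (∑ v ∈ s, f v) := by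
  classical
  induction s using Finset.induction with
  | empty => simp
  | insert x s' hx ih => rw [Finset.prod_insert hx, Finset.sum_insert hx, ih,
      zpow_add₀ ha]

lemma my_neg_one_zpow {K : Type*} [Field K] (E : ℤ) : (-1 : K) ^ E = (-1 : K) ^ E.natAbs := by
  rcases Int.even_or_odd E with he | ho
  · rw [he.neg_one_zpow, (Int.natAbs_even.2 he).neg_one_pow]
  · rw [ho.neg_one_zpow, (Int.natAbs_odd.2 ho).neg_one_pow]

lemma part4 {V' : Type*} [DecidableEq V'] (B : Finset V') (m : V' → ℕ) (hm : ∀ v ∈ B, 0 < m v)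
    (ε : V' → ℤ)
    (he : ∀ n : ℕ, 0 ≤ ∑ v ∈ B.filter (fun v => n ∣ m v), ε v) :
    ∃ p : Polynomial ℤ,
      (∏ v ∈ B, ((1 : RatFunc ℚ) - RatFunc.X ^ (m v)) ^ (ε v))
        = algebraMap (Polynomial ℚ) (RatFunc ℚ) (p.map (Int.castRingHom ℚ)) ∧
      (p.natDegree : ℤ) = ∑ v ∈ B, ε v * (m v : ℤ) := by
  classical
  set Φ : ℕ → RatFunc ℚ := fun n => algebraMap (Polynomial ℚ) (RatFunc ℚ) (cyclotomic n ℚ) with hΦdef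
  have hΦ : ∀ n, Φ n ≠ 0 := fun n => RatFunc.algebraMap_ne_zero (cyclotomic_ne_zero n ℚ)
  set N : Finset ℕ := B.biUnion (fun v => (m v).divisors) with hNdef
  set e : ℕ → ℤ := fun n => ∑ v ∈ B.filter (fun v => n ∣ m v), ε v with hedef
  set E : ℤ := ∑ v ∈ B, ε v with hEdef
  have key : ∀ v ∈ B, ((1 : RatFunc ℚ) - RatFunc.X ^ (m v))
      = (-1) * ∏ n ∈ N, (if n ∈ (m v).divisors then Φ n else 1) := by
    intro v hv
    rw [Finset.prod_ite_mem, Finset.inter_eq_right.2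
      (Finset.subset_biUnion_of_mem (fun v => (m v).divisors) hv)]
    have h1 := Polynomial.prod_cyclotomic_eq_X_pow_sub_one (hm v hv) ℚ
    have h2 : ∏ n ∈ (m v).divisors, Φ n
        = algebraMap (Polynomial ℚ) (RatFunc ℚ) (X ^ (m v) - 1) := by
      rw [← h1, _root_.map_prod]
    rw [h2, _root_.map_sub, _root_.map_pow, _root_.map_one, RatFunc.algebraMap_X]
    ring
  have step1 : (∏ v ∈ B, ((1 : RatFunc ℚ) - RatFunc.X ^ (m v)) ^ (ε v))
      = (-1 : RatFunc ℚ) ^ E * ∏ n ∈ N, Φ n ^ (e n) := by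
    calc (∏ v ∈ B, ((1 : RatFunc ℚ) - RatFunc.X ^ (m v)) ^ (ε v))
        = ∏ v ∈ B, ((-1 : RatFunc ℚ) ^ (ε v) *
            ∏ n ∈ N, (if n ∈ (m v).divisors then Φ n else 1) ^ (ε v)) := by
          refine Finset.prod_congr rfl (fun v hv => ?_)
          rw [key v hv, mul_zpow, Finset.prod_zpow]
      _ = (-1 : RatFunc ℚ) ^ E * ∏ v ∈ B, ∏ n ∈ N,
            (if n ∈ (m v).divisors then Φ n else 1) ^ (ε v) := by
          rw [Finset.prod_mul_distrib, my_prod_zpow B (-1 : RatFunc ℚ) (by norm_num) ε]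
      _ = (-1 : RatFunc ℚ) ^ E * ∏ n ∈ N, ∏ v ∈ B,
            (if n ∈ (m v).divisors then Φ n else 1) ^ (ε v) := by rw [Finset.prod_comm]
      _ = (-1 : RatFunc ℚ) ^ E * ∏ n ∈ N, Φ n ^ (e n) := by
          congr 1
          refine Finset.prod_congr rfl (fun n _ => ?_)
          have h3 : ∀ v ∈ B, (if n ∈ (m v).divisors then Φ n else 1) ^ (ε v)
              = Φ n ^ (if n ∣ m v then ε v else 0) := by
            intro v hv
            by_cases h : n ∣ m v
            · rw [if_pos h, if_pos (Nat.mem_divisors.2 ⟨h, (hm v hv).ne'⟩)]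
            · rw [if_neg h, if_neg (fun hc => h (Nat.mem_divisors.1 hc).1), zpow_zero, _root_.one_zpow]
          rw [Finset.prod_congr rfl h3, my_prod_zpow B (Φ n) (hΦ n)]
          congr 1
          exact (Finset.sum_filter (fun v => n ∣ m v) ε).symm
  have hN0 : ∀ n ∈ N, 0 < n := by
    intro n hn
    obtain ⟨v, _, hd⟩ := Finset.mem_biUnion.1 hn
    exact Nat.pos_of_mem_divisors hd
  -- replace zpows by pows
  have step2 : ∏ n ∈ N, Φ n ^ (e n) = ∏ n ∈ N, Φ n ^ ((e n).toNat) := by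
    refine Finset.prod_congr rfl (fun n _ => ?_)
    rw [← zpow_natCast, Int.toNat_of_nonneg (he n)]
  set p : Polynomial ℤ := (-1 : Polynomial ℤ) ^ E.natAbs *
    ∏ n ∈ N, (cyclotomic n ℤ) ^ ((e n).toNat) with hpdef
  refine ⟨p, ?_, ?_⟩
  · rw [step1, step2, hpdef]
    rw [Polynomial.map_mul, Polynomial.map_pow, Polynomial.map_neg, Polynomial.map_one,
      Polynomial.map_prod]
    simp only [Polynomial.map_pow, map_cyclotomic_int]
    rw [_root_.map_mul, _root_.map_pow, _root_.map_neg, _root_.map_one, _root_.map_prod]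
    simp only [_root_.map_pow]
    rw [my_neg_one_zpow]
  · have hprodne : (∏ n ∈ N, (cyclotomic n ℤ) ^ ((e n).toNat)) ≠ 0 :=
      Finset.prod_ne_zero_iff.2 (fun n _ => pow_ne_zero _ (cyclotomic_ne_zero n ℤ))
    have hdeg : p.natDegree = (∏ n ∈ N, (cyclotomic n ℤ) ^ ((e n).toNat)).natDegree := by
      rw [hpdef]
      rcases Nat.even_or_odd E.natAbs with hE | hE
      · rw [hE.neg_one_pow, one_mul]
      · rw [hE.neg_one_pow, neg_one_mul, natDegree_neg]
    rw [hdeg, Polynomial.natDegree_prod _ _ (fun n _ => pow_ne_zero _ (cyclotomic_ne_zero n ℤ))]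
    push_cast
    have : ∀ n ∈ N, (((cyclotomic n ℤ) ^ ((e n).toNat)).natDegree : ℤ)
        = e n * (n.totient : ℤ) := by
      intro n _
      rw [natDegree_pow, natDegree_cyclotomic]
      push_cast
      rw [Int.toNat_of_nonneg (he n)]
    rw [Finset.sum_congr rfl this]
    -- now swap sums
    have hswap : ∑ n ∈ N, e n * (n.totient : ℤ)
        = ∑ v ∈ B, ε v * ∑ n ∈ (m v).divisors, (n.totient : ℤ) := by
      simp only [hedef, Finset.sum_filter, Finset.sum_mul]
      rw [Finset.sum_comm]
      refine Finset.sum_congr rfl (fun v hv => ?_)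
      have hite : ∀ n ∈ N, (if n ∣ m v then ε v else 0) * (n.totient : ℤ)
          = if n ∣ m v then ε v * (n.totient : ℤ) else 0 := by
        intro n _; split <;> simp
      rw [Finset.sum_congr rfl hite, ← Finset.sum_filter, Finset.mul_sum]
      have hfil : N.filter (fun n => n ∣ m v) = (m v).divisors := by
        ext n
        simp only [Finset.mem_filter, Nat.mem_divisors]
        constructor
        · rintro ⟨_, hd⟩; exact ⟨hd, (hm v hv).ne'⟩
        · rintro ⟨hd, _⟩
          exact ⟨Finset.mem_biUnion.2 ⟨v, hv, Nat.mem_divisors.2 ⟨hd, (hm v hv).ne'⟩⟩, hd⟩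
      rw [hfil]
    rw [hswap]
    refine Finset.sum_congr rfl (fun v hv => ?_)
    have h4 : ∑ n ∈ (m v).divisors, (n.totient : ℤ) = ((m v : ℕ) : ℤ) := by
      rw [← Nat.cast_sum]
      exact_mod_cast Nat.sum_totient (m v)
    rw [h4]

lemma my_detpos (n : ℕ) : ∀ {V : Type} [Fintype V] [DecidableEq V] (M : Matrix V V ℚ),
    Fintype.card V = n → Mᵀ = M → (∀ x : V → ℚ, x ≠ 0 → 0 < x ⬝ᵥ M *ᵥ x) → 0 < M.det := by
  induction n with
  | zero =>
    intro V _ _ M hcard _ _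
    haveI : IsEmpty V := Fintype.card_eq_zero_iff.mp hcard
    simp [Matrix.det_isEmpty]
  | succ k ih =>
    intro V _ _ M hcard hsym hpd
    haveI : Nonempty V := Fintype.card_pos_iff.mp (by omega)
    obtain ⟨u⟩ := ‹Nonempty V›
    classical
    set e : {v : V // v ≠ u} ⊕ {v : V // ¬ v ≠ u} ≃ V := Equiv.sumCompl (· ≠ u) with hedef
    haveI : Unique {v : V // ¬ v ≠ u} :=
      ⟨⟨⟨u, not_ne_iff.2 rfl⟩⟩, fun a => Subtype.ext (not_ne_iff.1 a.2)⟩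
    set M' := M.submatrix e e with hM'def
    set A := M'.toBlocks₁₁ with hA
    set B := M'.toBlocks₁₂ with hB
    set D := M'.toBlocks₂₂ with hD
    have hsym' : ∀ a b : V, M a b = M b a := fun a b => by
      have h := congrFun (congrFun hsym a) b
      simpa [Matrix.transpose_apply] using h.symm
    have hC : M'.toBlocks₂₁ = Bᴴ := by
      ext i j
      simp only [toBlocks₂₁, toBlocks₁₂, conjTranspose_apply, hM'def, submatrix_apply, of_apply,
        star_trivial]
      exact hsym' _ _
    have hM' : M' = fromBlocks A B Bᴴ D := by
      rw [← hC, hA, hB, hD, fromBlocks_toBlocks]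
    -- quadratic form transfer
    have hquad : ∀ z : ({v : V // v ≠ u} ⊕ {v : V // ¬ v ≠ u}) → ℚ,
        z ⬝ᵥ M' *ᵥ z = (z ∘ e.symm) ⬝ᵥ M *ᵥ (z ∘ e.symm) := by
      intro z
      rw [hM'def, submatrix_mulVec_equiv]
      exact Fintype.sum_equiv e _ _ (fun i => by simp)
    have hpd' : ∀ z, z ≠ 0 → 0 < z ⬝ᵥ M' *ᵥ z := by
      intro z hz
      rw [hquad]
      refine hpd _ (fun hc => hz ?_)
      funext i
      have := congrFun hc (e i)
      simpa using this
    have hMuu : 0 < M u u := by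
      have h1 := hpd (Pi.single u 1) (by
        intro hc; have := congrFun hc u; simp [Pi.single_apply] at this)
      have h2 : (Pi.single u 1 : V → ℚ) ⬝ᵥ M *ᵥ (Pi.single u 1) = M u u := by
        rw [Matrix.mulVec_single, single_dotProduct]
        simp
      rwa [h2] at h1
    have he_inr : ∀ a : {v : V // ¬ v ≠ u}, e (Sum.inr a) = u := by
      intro a
      have : e (Sum.inr a) = a.1 := by simp [hedef]
      rw [this, not_ne_iff.1 a.2]
    have hDconst : ∀ a b, D a b = M u u := by
      intro a b
      simp [hD, toBlocks₂₂, hM'def, he_inr]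
    have hDuu : D default default = M u u := hDconst _ _
    have hdetD : D.det = M u u := by rw [det_unique, hDuu]
    haveI : Invertible D := invertibleOfIsUnitDet D (by rw [hdetD]; exact (isUnit_iff_ne_zero.2 hMuu.ne'))
    have hDher : D.IsHermitian := by
      ext i j
      simp only [conjTranspose_apply, star_trivial]
      have : ∀ a b : {v : V // ¬ v ≠ u}, D a b = M u u := by
        intro a b
        have ha : a = default := Subsingleton.elim _ _
        have hb : b = default := Subsingleton.elim _ _
        rw [ha, hb, hDuu]
      rw [this, this]
    set S := A - B * D⁻¹ * Bᴴ with hS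
    have hSpd : ∀ x, x ≠ 0 → 0 < x ⬝ᵥ S *ᵥ x := by
      intro x hx
      have hschur := Matrix.schur_complement_eq₂₂ A B x (-((D⁻¹ * Bᴴ) *ᵥ x)) hDher
      rw [add_neg_cancel] at hschur
      simp only [star_zero, Matrix.zero_vecMul, zero_dotProduct, zero_add] at hschur
      have hstar1 : star (x ⊕ᵥ -((D⁻¹ * Bᴴ) *ᵥ x)) = (x ⊕ᵥ -((D⁻¹ * Bᴴ) *ᵥ x)) := by
        funext i; exact star_trivial _
      have hstar2 : star x = x := by funext i; exact star_trivial _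
      rw [hstar1, hstar2, ← hM', ← Matrix.dotProduct_mulVec, ← Matrix.dotProduct_mulVec] at hschur
      have hz : (x ⊕ᵥ -((D⁻¹ * Bᴴ) *ᵥ x)) ≠ 0 := by
        intro hc
        apply hx; funext i; exact congrFun hc (Sum.inl i)
      have hpos := hpd' _ hz
      rw [hschur] at hpos
      exact hpos
    -- symmetry of S
    have hAsymm : Aᵀ = A := by
      ext i j
      simp only [transpose_apply, hA, toBlocks₁₁, hM'def, submatrix_apply, of_apply]
      exact hsym' _ _
    have hDt : Dᵀ = D := by
      ext i j
      simp only [transpose_apply]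
      rw [hDconst, hDconst]
    have hBH : Bᴴ = Bᵀ := by
      ext i j
      simp only [conjTranspose_apply, transpose_apply, star_trivial]
    have hSsym : Sᵀ = S := by
      rw [hS, transpose_sub, hAsymm, hBH]
      congr 1
      rw [Matrix.transpose_mul, Matrix.transpose_mul, transpose_transpose,
        Matrix.transpose_nonsing_inv, hDt, Matrix.mul_assoc]
    have hcardW : Fintype.card {v : V // v ≠ u} = k := by
      have h1 : Fintype.card {v : V // v = u} = 1 := Fintype.card_subtype_eq u
      have h2 : Fintype.card {v : V // ¬ v = u} = Fintype.card V - Fintype.card {v : V // v = u} :=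
        Fintype.card_subtype_compl _
      have h3 : Fintype.card {v : V // v ≠ u} = Fintype.card {v : V // ¬ v = u} := rfl
      omega
    have hSdet := ih S hcardW hSsym hSpd
    have hdetM' : M.det = M'.det := (det_submatrix_equiv_self e M).symm
    have hinv : (⅟D : Matrix _ _ ℚ) = D⁻¹ := invOf_eq_nonsing_inv D
    have hdet2 : M'.det = D.det * S.det := by
      rw [hM', det_fromBlocks₂₂, hinv, ← hS]
    rw [hdetM', hdet2, hdetD]
    exact mul_pos hMuu hSdet

lemma my_entries_pos {V : Type} [Fintype V] [DecidableEq V]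
    (G : SimpleGraph V) (hconn : G.Connected)
    (M : Matrix V V ℚ)
    (hoff : ∀ v w : V, v ≠ w → M v w = if G.Adj v w then -1 else 0)
    (hpd : ∀ x : V → ℚ, x ≠ 0 → 0 < x ⬝ᵥ M *ᵥ x)
    (u : V) (x : V → ℚ) (hx : M *ᵥ x = Pi.single u 1) :
    ∀ v, 0 < x v := by
  classical
  set y : V → ℚ := fun w => max (-(x w)) 0 with hy
  set z : V → ℚ := fun w => max (x w) 0 with hz
  have hy0 : ∀ w, 0 ≤ y w := fun w => le_max_right _ _
  have hz0 : ∀ w, 0 ≤ z w := fun w => le_max_right _ _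
  have hzy : ∀ w, z w - y w = x w := by
    intro w
    rcases le_total (x w) 0 with h | h
    · simp [hy, hz, max_eq_left, max_eq_right h, neg_nonneg.2 h, max_eq_left (neg_nonneg.2 h)]
    · simp [hy, hz, max_eq_left h, max_eq_right (neg_nonpos.2 h)]
  have hyz0 : ∀ w, y w * z w = 0 := by
    intro w
    rcases le_total (x w) 0 with h | h
    · simp [hz, max_eq_right h, mul_comm]
    · simp [hy, max_eq_right (neg_nonpos.2 h)]
  have hMnonpos : ∀ v w, v ≠ w → M v w ≤ 0 := by
    intro v w hvw
    rw [hoff v w hvw]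
    split <;> norm_num
  have hxz : ∀ w, x w = z w - y w := fun w => (hzy w).symm
  have hxeq : x = z - y := funext (fun w => by rw [hxz w]; rfl)
  have hyMz : y ⬝ᵥ M *ᵥ z ≤ 0 := by
    unfold dotProduct Matrix.mulVec
    refine Finset.sum_nonpos (fun v _ => ?_)
    have : y v * (dotProduct (M v) z) = ∑ w, y v * (M v w * z w) := by
      unfold dotProduct
      rw [Finset.mul_sum]
    rw [this]
    refine Finset.sum_nonpos (fun w _ => ?_)
    by_cases hvw : v = w
    · subst hvw
      have : y v * (M v v * z v) = M v v * (y v * z v) := by ring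
      rw [this, hyz0, mul_zero]
    · have h1 : M v w ≤ 0 := hMnonpos v w hvw
      have h2 : 0 ≤ y v * z w := mul_nonneg (hy0 v) (hz0 w)
      nlinarith
  have hyMx : y ⬝ᵥ (M *ᵥ x) = y u := by
    rw [hx, dotProduct_single, mul_one]
  have hyMy : y ⬝ᵥ M *ᵥ y ≤ 0 := by
    have hsplit : M *ᵥ x = M *ᵥ z - M *ᵥ y := by rw [hxeq, Matrix.mulVec_sub]
    have h1 : y ⬝ᵥ M *ᵥ y = y ⬝ᵥ M *ᵥ z - y ⬝ᵥ (M *ᵥ x) := by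
      rw [hsplit, dotProduct_sub]
      ring
    rw [h1, hyMx]
    have : 0 ≤ y u := hy0 u
    linarith
  have hyzero : y = 0 := by
    by_contra hne
    exact absurd hyMy (not_le.2 (hpd y hne))
  have hxnonneg : ∀ w, 0 ≤ x w := by
    intro w
    rw [← hzy w, hyzero]
    simpa using hz0 w
  have hxne : x ≠ 0 := by
    intro hc
    rw [hc, Matrix.mulVec_zero] at hx
    have := congrFun hx u
    simp at this
  have hxu : 0 < x u := by
    have h1 := hpd x hxne
    have h2 : x ⬝ᵥ M *ᵥ x = x u := by rw [hx, dotProduct_single, mul_one]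
    rwa [h2] at h1
  have hprop : ∀ v, x v = 0 → ∀ w, G.Adj v w → x w = 0 := by
    intro v hv w hadj
    have hvu : v ≠ u := by
      intro hc; rw [hc] at hv; rw [hv] at hxu; exact lt_irrefl _ hxu
    have hrow : (M *ᵥ x) v = 0 := by
      rw [hx]; exact Pi.single_eq_of_ne hvu 1
    have hexp : ∑ w' ∈ Finset.univ.erase v, M v w' * x w' + M v v * x v = 0 := by
      rw [← hrow]
      unfold Matrix.mulVec dotProduct
      exact Finset.sum_erase_add _ _ (Finset.mem_univ v)
    rw [hv, mul_zero, add_zero] at hexp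
    have hterm : ∀ w' ∈ Finset.univ.erase v, M v w' * x w' ≤ 0 := by
      intro w' hw'
      have hne : v ≠ w' := (Finset.ne_of_mem_erase hw').symm
      exact mul_nonpos_of_nonpos_of_nonneg (hMnonpos v w' hne) (hxnonneg w')
    have hall := (Finset.sum_eq_zero_iff_of_nonpos hterm).1 hexp
    have hwmem : w ∈ Finset.univ.erase v := by
      simp [Finset.mem_erase]
      exact (G.ne_of_adj hadj).symm
    have := hall w hwmem
    rw [hoff v w (G.ne_of_adj hadj), if_pos hadj] at this
    linarith [this]
  have hwalk : ∀ v w (p : G.Walk v w), w = u → x v = 0 → False := by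
    intro v w p
    induction p with
    | nil => intro hwu hv; subst hwu; rw [hv] at hxu; exact lt_irrefl _ hxu
    | cons h q ih => intro hwu hv; exact ih hwu (hprop _ hv _ h)
  intro v
  rcases lt_or_eq_of_le (hxnonneg v) with h | h
  · exact h
  · obtain ⟨p⟩ := hconn.preconnected v u
    exact (hwalk v u p rfl h.symm).elim


lemma my_acyclic_induce {V : Type} (G : SimpleGraph V) (hac : G.IsAcyclic) (s : Set V) :
    (G.induce s).IsAcyclic := by
  intro v c hc
  have hinj : Function.Injective ⇑(SimpleGraph.Embedding.induce (G := G) s).toHom :=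
    Subtype.val_injective
  exact hac (c.map (SimpleGraph.Embedding.induce s).toHom) (hc.map hinj)

lemma my_exit {V : Type} (G : SimpleGraph V) (S : Set V) :
    ∀ {a b : V} (_ : G.Walk a b), a ∈ S → b ∉ S → ∃ v ∈ S, ∃ w, w ∉ S ∧ G.Adj v w := by
  intro a b p
  induction p with
  | nil => intro ha hb; exact absurd ha hb
  | @cons a y b h q ih =>
    intro ha hb
    by_cases hy : y ∈ S
    · exact ih hy hb
    · exact ⟨a, ha, y, hy, h⟩

lemma my_sum_deg_connected {V : Type} [Fintype V] [DecidableEq V] (G : SimpleGraph V)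
    (hT : G.IsTree) (C : Finset V) (hCne : C.Nonempty)
    (hCconn : (G.induce (C : Set V)).Connected) :
    ∑ v ∈ C, ((deg G v : ℤ) - 2)
      = (∑ v ∈ C, (((G.neighborSet v) \ (C : Set V)).ncard : ℤ)) - 2 := by
  classical
  set din : V → ℕ := fun v => ((G.neighborSet v) ∩ (C : Set V)).ncard with hdin
  set dout : V → ℕ := fun v => ((G.neighborSet v) \ (C : Set V)).ncard with hdout
  have hdeg : ∀ v, deg G v = din v + dout v := by
    intro v
    rw [hdin, hdout, deg]
    exact (Set.ncard_inter_add_ncard_diff_eq_ncard _ _ (Set.toFinite _)).symm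
  -- the induced graph is a tree
  have hTi : (G.induce (C : Set V)).IsTree :=
    ⟨hCconn, my_acyclic_induce G hT.IsAcyclic _⟩
  have hcard : (G.induce (C : Set V)).edgeFinset.card + 1 = Fintype.card ↥(C : Set V) :=
    hTi.card_edgeFinset
  have hcard2 : Fintype.card ↥(C : Set V) = C.card := by
    rw [← Set.toFinset_card, Finset.toFinset_coe]
  have hhs : ∑ a : ↥(C : Set V), (G.induce (C : Set V)).degree a
      = 2 * (G.induce (C : Set V)).edgeFinset.card :=
    SimpleGraph.sum_degrees_eq_twice_card_edges _
  have hdegeq : ∀ a : ↥(C : Set V), (G.induce (C : Set V)).degree a = din a.1 := by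
    intro a
    have h1 : Subtype.val '' ((G.induce (C : Set V)).neighborSet a)
        = (G.neighborSet a.1) ∩ (C : Set V) := by
      ext w
      simp only [Set.mem_image, SimpleGraph.mem_neighborSet, Set.mem_inter_iff]
      constructor
      · rintro ⟨⟨w', hw'⟩, hadj, rfl⟩
        exact ⟨hadj, hw'⟩
      · rintro ⟨hadj, hw⟩
        exact ⟨⟨w, hw⟩, hadj, rfl⟩
    have h2 : ((G.induce (C : Set V)).neighborSet a).ncard = din a.1 := by
      change _ = (G.neighborSet a.1 ∩ (C : Set V)).ncard
      rw [← h1, Set.ncard_image_of_injective _ Subtype.val_injective]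
    rw [← h2, Set.ncard_eq_toFinset_card', Set.toFinset_card,
      SimpleGraph.card_neighborSet_eq_degree]
  have hsum_din : ∑ v ∈ C, din v = ∑ a : ↥(C : Set V), din a.1 := by
    rw [← Finset.sum_coe_sort C din]
    exact Fintype.sum_equiv (Equiv.subtypeEquivProp (by ext v; simp)) _ _ (fun a => rfl)
  have hkey : ∑ v ∈ C, (din v : ℤ) = 2 * (C.card : ℤ) - 2 := by
    have : ∑ a : ↥(C : Set V), din a.1 = 2 * (G.induce (C : Set V)).edgeFinset.card := by
      rw [← hhs]
      exact Finset.sum_congr rfl (fun a _ => (hdegeq a).symm)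
    have h3 : ∑ v ∈ C, din v = 2 * (G.induce (C : Set V)).edgeFinset.card := by
      rw [hsum_din, this]
    have h4 : ((G.induce (C : Set V)).edgeFinset.card : ℤ) = (C.card : ℤ) - 1 := by
      have := hcard
      rw [hcard2] at this
      have hc1 : 1 ≤ C.card := Finset.card_pos.2 hCne
      omega
    calc ∑ v ∈ C, (din v : ℤ) = ((∑ v ∈ C, din v : ℕ) : ℤ) := by push_cast; rfl
      _ = 2 * (((G.induce (C : Set V)).edgeFinset.card : ℕ) : ℤ) := by rw [h3]; push_cast; ring
      _ = 2 * (C.card : ℤ) - 2 := by rw [h4]; ring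
  calc ∑ v ∈ C, ((deg G v : ℤ) - 2)
      = ∑ v ∈ C, ((din v : ℤ) + (dout v : ℤ) - 2) := by
        refine Finset.sum_congr rfl (fun v _ => ?_)
        rw [hdeg v]; push_cast; ring
    _ = ∑ v ∈ C, (din v : ℤ) + ∑ v ∈ C, (dout v : ℤ) - 2 * C.card := by
        rw [Finset.sum_sub_distrib, Finset.sum_add_distrib, Finset.sum_const]
        push_cast; ring
    _ = (∑ v ∈ C, (dout v : ℤ)) - 2 := by rw [hkey]; ring

lemma part3C {V : Type} [Fintype V] [DecidableEq V] (G : SimpleGraph V) (hT : G.IsTree) (u : V)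
    (C : Finset V) (hne : C.Nonempty) (hconn : (G.induce (C : Set V)).Connected)
    (hrule : ∀ w ∈ C, w ≠ u → ((G.neighborSet w) \ (C : Set V)).ncard ≠ 1)
    (hu : 2 ≤ ((G.neighborSet u) \ (C : Set V)).ncard) :
    0 ≤ ∑ v ∈ C, ((deg G v : ℤ) - 2) := by
  rw [my_sum_deg_connected G hT C hne hconn]
  have hnonneg : ∀ v ∈ C, (0 : ℤ) ≤ (((G.neighborSet v) \ (C : Set V)).ncard : ℤ) :=
    fun v _ => Int.natCast_nonneg _
  by_cases huC : u ∈ C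
  · have h1 := Finset.single_le_sum hnonneg huC
    have h2 : (2 : ℤ) ≤ (((G.neighborSet u) \ (C : Set V)).ncard : ℤ) := by exact_mod_cast hu
    linarith
  · obtain ⟨c0, hc0⟩ := hne
    have hbu : u ∉ (C : Set V) := by simpa using huC
    obtain ⟨p⟩ := hT.isConnected.preconnected c0 u
    obtain ⟨v, hvC, w, hwnC, hadj⟩ := my_exit G (C : Set V) p (by simpa using hc0) hbu
    have hvC' : v ∈ C := by simpa using hvC
    have hvne : v ≠ u := fun hc => hbu (hc ▸ hvC)
    have h1 : 1 ≤ ((G.neighborSet v) \ (C : Set V)).ncard := by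
      have hne2 : ((G.neighborSet v) \ (C : Set V)).Nonempty := ⟨w, hadj, hwnC⟩
      have := (Set.ncard_pos (Set.toFinite _)).2 hne2
      omega
    have h2 := hrule v hvC' hvne
    have h3 : 2 ≤ ((G.neighborSet v) \ (C : Set V)).ncard := by omega
    have h4 := Finset.single_le_sum hnonneg hvC'
    have h5 : (2 : ℤ) ≤ (((G.neighborSet v) \ (C : Set V)).ncard : ℤ) := by exact_mod_cast h3
    linarith

lemma part3 {V : Type} [Fintype V] [DecidableEq V] (G : SimpleGraph V) (hT : G.IsTree) (u : V)
    (S : Finset V)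
    (hrule : ∀ w ∈ S, w ≠ u → ((G.neighborSet w) \ (S : Set V)).ncard ≠ 1)
    (hu : 2 ≤ ((G.neighborSet u) \ (S : Set V)).ncard) :
    0 ≤ ∑ v ∈ S, ((deg G v : ℤ) - 2) := by
  classical
  suffices H : ∀ n (S : Finset V), S.card ≤ n →
      (∀ w ∈ S, w ≠ u → ((G.neighborSet w) \ (S : Set V)).ncard ≠ 1) →
      (2 ≤ ((G.neighborSet u) \ (S : Set V)).ncard) →
      0 ≤ ∑ v ∈ S, ((deg G v : ℤ) - 2) by
    exact H S.card S le_rfl hrule hu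
  intro n
  induction n with
  | zero =>
    intro S hcard _ _
    have : S = ∅ := Finset.card_eq_zero.1 (Nat.le_antisymm hcard (Nat.zero_le _))
    subst this
    simp
  | succ k ih =>
    intro S hcard hrule hu
    rcases S.eq_empty_or_nonempty with rfl | ⟨s0, hs0⟩
    · simp
    have hs0' : s0 ∈ (S : Set V) := by simpa using hs0
    set C : Finset V := S.filter (fun v =>
      ∃ h : v ∈ (S : Set V), (G.induce (S : Set V)).Reachable ⟨s0, hs0'⟩ ⟨v, h⟩) with hCdef
    have hCsub : C ⊆ S := Finset.filter_subset _ _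
    have hs0C : s0 ∈ C := by
      rw [hCdef, Finset.mem_filter]
      exact ⟨hs0, hs0', SimpleGraph.Reachable.refl _⟩
    have hmemC : ∀ v, v ∈ C ↔ (v ∈ S ∧ ∃ h : v ∈ (S : Set V),
        (G.induce (S : Set V)).Reachable ⟨s0, hs0'⟩ ⟨v, h⟩) := by
      intro v; rw [hCdef, Finset.mem_filter]
    have hclosure : ∀ v ∈ C, ∀ w, G.Adj v w → w ∈ S → w ∈ C := by
      intro v hv w hadj hwS
      obtain ⟨hvS, hv', hreach⟩ := (hmemC v).1 hv
      have hw' : w ∈ (S : Set V) := by simpa using hwS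
      have hadj' : (G.induce (S : Set V)).Adj ⟨v, hv'⟩ ⟨w, hw'⟩ := by
        simp only [SimpleGraph.comap_adj, Function.Embedding.coe_subtype]
        exact hadj
      exact (hmemC w).2 ⟨hwS, hw', hreach.trans hadj'.reachable⟩
    -- transfer walks into C
    have transfer : ∀ (x y : ↥(S : Set V)) (p : (G.induce (S : Set V)).Walk x y)
        (hx : x.1 ∈ C), ∃ hy : y.1 ∈ (C : Set V),
        (G.induce (C : Set V)).Reachable ⟨x.1, Finset.mem_coe.2 hx⟩ ⟨y.1, hy⟩ := by
      intro x y p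
      induction p with
      | nil => intro hx; exact ⟨Finset.mem_coe.2 hx, SimpleGraph.Reachable.refl _⟩
      | @cons xa xb xc hab q ihq =>
        intro hx
        have hGab : G.Adj xa.1 xb.1 := hab
        have hbC : xb.1 ∈ C := hclosure xa.1 hx xb.1 hGab (by simpa using xb.2)
        obtain ⟨hyC, hreach⟩ := ihq hbC
        have hadjC : (G.induce (C : Set V)).Adj ⟨xa.1, Finset.mem_coe.2 hx⟩
            ⟨xb.1, Finset.mem_coe.2 hbC⟩ := by
          simp only [SimpleGraph.comap_adj, Function.Embedding.coe_subtype]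
          exact hGab
        exact ⟨hyC, hadjC.reachable.trans hreach⟩
    have reach_s0 : ∀ a : ↥(C : Set V), (G.induce (C : Set V)).Reachable
        ⟨s0, Finset.mem_coe.2 hs0C⟩ a := by
      intro a
      have haC : a.1 ∈ C := by simpa using a.2
      obtain ⟨haS, ha', hra⟩ := (hmemC a.1).1 haC
      obtain ⟨p⟩ := hra
      obtain ⟨hyC, hreach⟩ := transfer ⟨s0, hs0'⟩ ⟨a.1, ha'⟩ p hs0C
      have ha2 : (⟨a.1, hyC⟩ : ↥(C : Set V)) = a := Subtype.ext rfl
      rw [ha2] at hreach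
      exact hreach
    have hCconn : (G.induce (C : Set V)).Connected := by
      haveI : Nonempty ↥(C : Set V) := ⟨⟨s0, Finset.mem_coe.2 hs0C⟩⟩
      exact SimpleGraph.Connected.mk (fun a b => (reach_s0 a).symm.trans (reach_s0 b))
    -- out-sets agree
    have houtC : ∀ w ∈ C, (G.neighborSet w) \ (C : Set V) = (G.neighborSet w) \ (S : Set V) := by
      intro w hw
      ext z
      simp only [Set.mem_diff, SimpleGraph.mem_neighborSet]
      constructor
      · rintro ⟨hadj, hz⟩
        refine ⟨hadj, fun hzS => hz ?_⟩
        have : z ∈ C := hclosure w hw z hadj (by simpa using hzS)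
        simpa using this
      · rintro ⟨hadj, hz⟩
        exact ⟨hadj, fun hzC => hz (by simpa using hCsub (by simpa using hzC))⟩
    set S' : Finset V := S \ C with hS'def
    have houtS' : ∀ w ∈ S', (G.neighborSet w) \ (S' : Set V) = (G.neighborSet w) \ (S : Set V) := by
      intro w hw
      have hwS : w ∈ S := (Finset.mem_sdiff.1 hw).1
      have hwC : w ∉ C := (Finset.mem_sdiff.1 hw).2
      ext z
      simp only [Set.mem_diff, SimpleGraph.mem_neighborSet]
      constructor
      · rintro ⟨hadj, hz⟩
        refine ⟨hadj, fun hzS => ?_⟩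
        have hzS'' : z ∈ S := by simpa using hzS
        by_cases hzC : z ∈ C
        · exact hwC (hclosure z hzC w (G.adj_symm hadj) hwS)
        · apply hz
          have : z ∈ S' := Finset.mem_sdiff.2 ⟨hzS'', hzC⟩
          simpa using this
      · rintro ⟨hadj, hz⟩
        refine ⟨hadj, fun hzS' => hz ?_⟩
        have : z ∈ S' := by simpa using hzS'
        have := (Finset.mem_sdiff.1 this).1
        simpa using this
    have hsplit : ∑ v ∈ S', ((deg G v : ℤ) - 2) + ∑ v ∈ C, ((deg G v : ℤ) - 2)
        = ∑ v ∈ S, ((deg G v : ℤ) - 2) := Finset.sum_sdiff hCsub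
    have hCpart : 0 ≤ ∑ v ∈ C, ((deg G v : ℤ) - 2) := by
      refine part3C G hT u C ⟨s0, hs0C⟩ hCconn ?_ ?_
      · intro w hw hwu
        rw [houtC w hw]
        exact hrule w (hCsub hw) hwu
      · calc 2 ≤ ((G.neighborSet u) \ (S : Set V)).ncard := hu
          _ ≤ ((G.neighborSet u) \ (C : Set V)).ncard := by
            refine Set.ncard_le_ncard ?_ (Set.toFinite _)
            intro z hz
            exact ⟨hz.1, fun hc => hz.2 (by simpa using hCsub (by simpa using hc))⟩
    have hS'part : 0 ≤ ∑ v ∈ S', ((deg G v : ℤ) - 2) := by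
      refine ih S' ?_ ?_ ?_
      · have h1 : S'.card = S.card - C.card := Finset.card_sdiff_of_subset hCsub
        have h2 : 1 ≤ C.card := Finset.card_pos.2 ⟨s0, hs0C⟩
        omega
      · intro w hw hwu
        rw [houtS' w hw]
        exact hrule w ((Finset.mem_sdiff.1 hw).1) hwu
      · calc 2 ≤ ((G.neighborSet u) \ (S : Set V)).ncard := hu
          _ ≤ ((G.neighborSet u) \ (S' : Set V)).ncard := by
            refine Set.ncard_le_ncard ?_ (Set.toFinite _)
            intro z hz
            refine ⟨hz.1, fun hc => hz.2 ?_⟩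
            have : z ∈ S' := by simpa using hc
            simpa using (Finset.mem_sdiff.1 this).1
    linarith

lemma my_walk_in {V : Type} (G : SimpleGraph V) (s : Set V) {a b : ↥s}
    (h : (G.induce s).Reachable a b) : ∃ p : G.Walk a.1 b.1, ∀ x ∈ p.support, x ∈ s := by
  obtain ⟨q⟩ := h
  refine ⟨q.map (SimpleGraph.Embedding.induce s).toHom, ?_⟩
  intro x hx
  change x ∈ (q.map (SimpleGraph.Embedding.induce s).toHom).support at hx
  rw [SimpleGraph.Walk.support_map] at hx
  obtain ⟨⟨x', hx'⟩, _, rfl⟩ := List.mem_map.1 hx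
  exact hx'

lemma V1u_closure {V : Type} [Fintype V] [DecidableEq V] (G : SimpleGraph V) (hG : G.IsTree)
    (V2 : Set V) (hV2conn : (G.induce V2).Connected) (u : V) (huV2 : u ∈ V2) :
    ∀ v ∈ Plumbing.V1u G V2 u, v ≠ u →
      v ∉ V2 ∧ ∀ w, G.Adj v w → w ∈ Plumbing.V1u G V2 u := by
  intro v hv hvne
  have hins := hv
  rw [Plumbing.V1u, Set.mem_insert_iff] at hins
  rcases hins with rfl | hmem
  · exact absurd rfl hvne
  obtain ⟨hvc, w0, hw0c, hadj0, hcomp⟩ := hmem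
  refine ⟨hvc, ?_⟩
  intro w hvw
  by_cases hwV2 : w ∈ V2
  · -- show w = u
    have hwu : w = u := by
      by_contra hwu
      have hbridge := (SimpleGraph.isAcyclic_iff_forall_adj_isBridge.1 hG.IsAcyclic) hadj0
      rw [SimpleGraph.isBridge_iff_adj_and_forall_walk_mem_edges] at hbridge
      have hall := hbridge
      have hruw : (G.induce V2).Reachable ⟨u, huV2⟩ ⟨w, hwV2⟩ := hV2conn.preconnected _ _
      obtain ⟨p1, hp1⟩ := my_walk_in G V2 hruw
      have hr2 : (G.induce V2ᶜ).Reachable ⟨v, hvc⟩ ⟨w0, hw0c⟩ :=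
        SimpleGraph.ConnectedComponent.exact hcomp
      obtain ⟨p2, hp2⟩ := my_walk_in G V2ᶜ hr2
      have hedge := hall (p1.append (SimpleGraph.Walk.cons (G.adj_symm hvw) p2))
      rw [SimpleGraph.Walk.edges_append] at hedge
      rcases List.mem_append.1 hedge with h1 | h2
      · have : w0 ∈ p1.support := SimpleGraph.Walk.snd_mem_support_of_mem_edges p1 h1
        exact hw0c (hp1 _ this)
      · rw [SimpleGraph.Walk.edges_cons] at h2
        rcases List.mem_cons.1 h2 with heq | h3
        · rcases Sym2.eq_iff.1 heq with ⟨h4, h5⟩ | ⟨h4, h5⟩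
          · exact hwu h4.symm
          · exact hvc (h4 ▸ huV2)
        · have : u ∈ p2.support := SimpleGraph.Walk.fst_mem_support_of_mem_edges p2 h3
          exact (hp2 _ this) huV2
    rw [hwu]
    exact Set.mem_insert u _
  · have hwc : w ∈ (V2ᶜ : Set V) := hwV2
    have hadj' : (G.induce (V2ᶜ : Set V)).Adj ⟨w, hwc⟩ ⟨v, hvc⟩ := by
      simp only [SimpleGraph.comap_adj, Function.Embedding.coe_subtype]
      exact G.adj_symm hvw
    have hcomp2 : (G.induce (V2ᶜ : Set V)).connectedComponentMk ⟨w, hwc⟩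
        = (G.induce (V2ᶜ : Set V)).connectedComponentMk ⟨w0, hw0c⟩ :=
      (SimpleGraph.ConnectedComponent.sound hadj'.reachable).trans hcomp
    exact Set.mem_insert_of_mem _ ⟨hwc, w0, hw0c, hadj0, hcomp2⟩


/-- for a boundary vertex `u` with `δ_{2,u} ≥ 2`, the multiplicities
`m_v = det(−A)·(E*_v)_u`, `v ∈ V_{1,u}`, are positive integers and the zeta function
`Π_{v ∈ V_{1,u}} (1 − t^{m_v})^{δ_v − 2}` is a polynomial with integer coefficients of
degree `Σ_{v ∈ V_{1,u}} (δ_v − 2)·m_v`. -/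
theorem statement8 (V : Type) [Fintype V] [DecidableEq V]
    (G : SimpleGraph V) (hG : G.IsTree)
    (A : Matrix V V ℤ) (hAsymm : A.IsSymm)
    (hAadj : ∀ v w : V, v ≠ w → A v w = if G.Adj v w then 1 else 0)
    (hAneg : NegDef A)
    (V2 : Set V) (hV2conn : (G.induce V2).Connected)
    (u : V) (huV2 : u ∈ V2) (hubd : ∃ w, w ∉ V2 ∧ G.Adj u w)
    (hδ2 : 2 ≤ (G.neighborSet u ∩ V2).ncard) :
    ∃ m : V → ℕ,
      (∀ v ∈ V1u G V2 u, (m v : ℚ) = (((-A).det : ℤ) : ℚ) * Estar A v u) ∧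
      (∀ v ∈ V1u G V2 u, 0 < m v) ∧
      ∃ p : Polynomial ℤ,
        (∏ᶠ v ∈ V1u G V2 u,
            ((1 : RatFunc ℚ) - RatFunc.X ^ (m v)) ^ ((deg G v : ℤ) - 2))
          = algebraMap (Polynomial ℚ) (RatFunc ℚ) (p.map (Int.castRingHom ℚ)) ∧
        (p.natDegree : ℤ) = ∑ᶠ v ∈ V1u G V2 u, ((deg G v : ℤ) - 2) * (m v : ℤ) := by
  classical
  set Mq : Matrix V V ℚ := -(Aq A) with hMq
  have hMqentry : ∀ v w, Mq v w = -((A v w : ℤ) : ℚ) := by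
    intro v w; simp [hMq, Aq, Matrix.neg_apply, Matrix.map_apply]
  have hMqsym : Mqᵀ = Mq := by
    ext v w
    have h := congrFun (congrFun hAsymm v) w
    simp only [Matrix.transpose_apply] at h
    simp only [Matrix.transpose_apply]
    rw [hMqentry, hMqentry, h]
  have hMqpd : ∀ x : V → ℚ, x ≠ 0 → 0 < x ⬝ᵥ Mq *ᵥ x := by
    intro x hx
    have h := hAneg x hx
    have h2 : x ⬝ᵥ Mq *ᵥ x = -(x ⬝ᵥ (Aq A) *ᵥ x) := by
      rw [hMq, Matrix.neg_mulVec, dotProduct_neg]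
    rw [h2]
    have : (Aq A).mulVec x = (Aq A) *ᵥ x := rfl
    rw [this] at h
    linarith
  have hdetpos : 0 < Mq.det := my_detpos (Fintype.card V) Mq rfl hMqsym hMqpd
  have hdetne : Mq.det ≠ 0 := ne_of_gt hdetpos
  have hmapM : (Int.castRingHom ℚ).mapMatrix (-A) = Mq := by
    ext v w
    rw [RingHom.mapMatrix_apply]
    simp [Matrix.map_apply, hMqentry, Matrix.neg_apply]
  have hdetA : (((-A).det : ℤ) : ℚ) = Mq.det := by
    rw [← hmapM, ← RingHom.map_det]
    simp
  have hdetAZ : 0 < (-A).det := by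
    have h : (0:ℚ) < (((-A).det : ℤ) : ℚ) := by rw [hdetA]; exact hdetpos
    exact_mod_cast h
  set x : V → ℚ := Mq⁻¹ *ᵥ Pi.single u 1 with hxdef
  have hMx : Mq *ᵥ x = Pi.single u 1 := by
    rw [hxdef, Matrix.mulVec_mulVec, Matrix.mul_nonsing_inv _ (isUnit_iff_ne_zero.2 hdetne),
      Matrix.one_mulVec]
  have hoff : ∀ v w, v ≠ w → Mq v w = if G.Adj v w then -1 else 0 := by
    intro v w hvw
    rw [hMqentry, hAadj v w hvw]
    split <;> norm_num
  have hxpos : ∀ v, 0 < x v := my_entries_pos G hG.isConnected Mq hoff hMqpd u x hMx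
  set m' : V → ℤ := fun v => (Matrix.adjugate (-A)) u v with hm'def
  have hadjmap : Mq.adjugate = ((-A).adjugate).map (fun z : ℤ => (z:ℚ)) := by
    rw [← hmapM, ← RingHom.map_adjugate, RingHom.mapMatrix_apply]
    rfl
  have hinvsymm : Mq⁻¹ᵀ = Mq⁻¹ := by rw [Matrix.transpose_nonsing_inv, hMqsym]
  have hxv : ∀ v, x v = Mq⁻¹ v u := by
    intro v
    rw [hxdef, Matrix.mulVec_single]
    simp
  have hm'q : ∀ v, (m' v : ℚ) = Mq.det * x v := by
    intro v
    have h2 : Mq.det • Mq⁻¹ = Mq.adjugate := by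
      rw [Matrix.inv_def, smul_smul, Ring.inverse_eq_inv', mul_inv_cancel₀ hdetne, one_smul]
    have h1 : Mq.adjugate u v = Mq.det * Mq⁻¹ u v := by
      have h := congrFun (congrFun h2 u) v
      simp only [Matrix.smul_apply, smul_eq_mul] at h
      exact h.symm
    have h3 : Mq⁻¹ u v = Mq⁻¹ v u := by
      have h := congrFun (congrFun hinvsymm v) u
      simpa [Matrix.transpose_apply] using h
    have h4 : (m' v : ℚ) = Mq.adjugate u v := by
      rw [hm'def, hadjmap]
      simp [Matrix.map_apply]
    rw [h4, h1, h3, ← hxv v]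
  have hm'pos : ∀ v, 0 < m' v := by
    intro v
    have h : (0:ℚ) < (m' v : ℚ) := by rw [hm'q v]; exact mul_pos hdetpos (hxpos v)
    exact_mod_cast h
  set mm : V → ℕ := fun v => (m' v).toNat with hmmdef
  have hmmz : ∀ v, ((mm v : ℕ) : ℤ) = m' v := fun v => Int.toNat_of_nonneg (hm'pos v).le
  have hmmq : ∀ v, ((mm v : ℕ) : ℚ) = (m' v : ℚ) := by
    intro v
    exact_mod_cast congrArg (fun z : ℤ => (z:ℚ)) (hmmz v)
  have hmmpos : ∀ v, 0 < mm v := by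
    intro v
    have h := hm'pos v
    have := hmmz v
    omega
  have hAqinv : (Aq A)⁻¹ = -(Mq⁻¹) := by
    apply Matrix.inv_eq_right_inv
    have hAqM : Aq A = -Mq := by rw [hMq, neg_neg]
    rw [hAqM, Matrix.neg_mul, Matrix.mul_neg, neg_neg,
      Matrix.mul_nonsing_inv _ (isUnit_iff_ne_zero.2 hdetne)]
  have hEstar : ∀ v, Estar A v u = x v := by
    intro v
    have h1 : Estar A v u = (-(Aq A)⁻¹) u v := rfl
    rw [h1, hAqinv, neg_neg]
    have hsy : Mq⁻¹ u v = Mq⁻¹ v u := by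
      have h := congrFun (congrFun hinvsymm v) u
      simpa [Matrix.transpose_apply] using h
    rw [hsy, ← hxv v]
  have hbullet1 : ∀ v, ((mm v : ℕ) : ℚ) = (((-A).det : ℤ) : ℚ) * Estar A v u := by
    intro v
    rw [hmmq v, hm'q v, hEstar v, hdetA]
  -- the finset for V1u
  have hBfin : (V1u G V2 u).Finite := Set.toFinite _
  set Bf : Finset V := hBfin.toFinset with hBf
  have hBcoe : (Bf : Set V) = V1u G V2 u := hBfin.coe_toFinset
  have hclos := V1u_closure G hG V2 hV2conn u huV2
  -- the linear relations
  have hrel : ∀ w, w ≠ u → ∑ v ∈ (G.neighborSet w).toFinset, m' v = -(m' w * A w w) := by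
    intro w hwu
    have h0 := congrFun (congrFun (Matrix.adjugate_mul (-A)) u) w
    rw [Matrix.mul_apply] at h0
    have h1 : ((-A).det • (1 : Matrix V V ℤ)) u w = 0 := by
      rw [Matrix.smul_apply, Matrix.one_apply_ne (Ne.symm hwu), smul_zero]
    rw [h1] at h0
    have h3 : ∀ v : V, (-A).adjugate u v * (-A) v w = -(m' v * A v w) := by
      intro v
      simp only [hm'def, Matrix.neg_apply]
      ring
    rw [Finset.sum_congr rfl (fun v _ => h3 v)] at h0
    have h2 : ∑ v, m' v * A v w = 0 := by
      have h2' : -∑ v, m' v * A v w = 0 := by rw [← h0]; rw [Finset.sum_neg_distrib]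
      linarith
    have h4 : ∑ v ∈ Finset.univ.erase w, m' v * A v w + m' w * A w w = 0 := by
      rw [Finset.sum_erase_add _ _ (Finset.mem_univ w)]; exact h2
    have h5 : ∑ v ∈ Finset.univ.erase w, m' v * A v w = ∑ v ∈ (G.neighborSet w).toFinset, m' v := by
      calc ∑ v ∈ Finset.univ.erase w, m' v * A v w
          = ∑ v ∈ Finset.univ.erase w, (if G.Adj v w then m' v else 0) := by
            refine Finset.sum_congr rfl (fun v hv => ?_)
            rw [hAadj v w (Finset.ne_of_mem_erase hv)]
            split <;> ring
        _ = ∑ v ∈ (Finset.univ.erase w).filter (fun v => G.Adj v w), m' v := by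
            rw [Finset.sum_filter]
        _ = ∑ v ∈ (G.neighborSet w).toFinset, m' v := by
            congr 1
            ext v
            simp only [Finset.mem_filter, Finset.mem_erase, Finset.mem_univ, true_and,
              and_true, Set.mem_toFinset, SimpleGraph.mem_neighborSet]
            constructor
            · rintro ⟨_, hadj⟩; exact G.adj_symm hadj
            · intro hadj; exact ⟨(G.ne_of_adj hadj).symm, G.adj_symm hadj⟩
    linarith
  -- the nonnegativity of the cyclotomic exponents
  have he : ∀ n : ℕ, 0 ≤ ∑ v ∈ Bf.filter (fun v => n ∣ mm v), ((deg G v : ℤ) - 2) := by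
    intro n
    rcases Nat.eq_zero_or_pos n with rfl | hn
    · have hempty : Bf.filter (fun v => 0 ∣ mm v) = ∅ :=
        Finset.filter_false_of_mem (fun v _ => by
          rw [zero_dvd_iff]; exact (hmmpos v).ne')
      rw [hempty, Finset.sum_empty]
    · set S : Finset V := Bf.filter (fun v => n ∣ mm v) with hSdef
      refine part3 G hG u S ?_ ?_
      · intro w hwS hwu hc1
        obtain ⟨v0, hv0⟩ := Set.ncard_eq_one.1 hc1
        have hwB : w ∈ Bf := (Finset.mem_filter.1 hwS).1
        have hwV1u : w ∈ V1u G V2 u := (hBfin.mem_toFinset).1 hwB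
        obtain ⟨hwnV2, hwclos⟩ := hclos w hwV1u hwu
        have hdvdw : (n:ℤ) ∣ m' w := by
          have h5 : n ∣ mm w := (Finset.mem_filter.1 hwS).2
          rw [← hmmz w]
          exact_mod_cast h5
        have hdvdsum : (n:ℤ) ∣ ∑ v ∈ (G.neighborSet w).toFinset, m' v := by
          rw [hrel w hwu]
          exact dvd_neg.2 (hdvdw.mul_right _)
        have hdvd1 : (n:ℤ) ∣ ∑ v ∈ (G.neighborSet w).toFinset ∩ S, m' v := by
          refine Finset.dvd_sum (fun v hv => ?_)
          have hvS : v ∈ S := (Finset.mem_inter.1 hv).2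
          have h5 : n ∣ mm v := (Finset.mem_filter.1 hvS).2
          rw [← hmmz v]
          exact_mod_cast h5
        have hsum3 := Finset.sum_inter_add_sum_sdiff ((G.neighborSet w).toFinset) S m'
        have hdvd2 : (n:ℤ) ∣ ∑ v ∈ (G.neighborSet w).toFinset \ S, m' v := by
          have h7 : ∑ v ∈ (G.neighborSet w).toFinset \ S, m' v
              = (∑ v ∈ (G.neighborSet w).toFinset, m' v)
                - ∑ v ∈ (G.neighborSet w).toFinset ∩ S, m' v := by linarith
          rw [h7]; exact dvd_sub hdvdsum hdvd1
        have hsetS : (((G.neighborSet w).toFinset \ S : Finset V) : Set V) = {v0} := by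
          rw [Finset.coe_sdiff, Set.coe_toFinset]
          exact hv0
        have hfinS : (G.neighborSet w).toFinset \ S = {v0} :=
          Finset.coe_injective (by rw [hsetS, Finset.coe_singleton])
        have hdvdv0 : (n:ℤ) ∣ m' v0 := by
          rw [hfinS, Finset.sum_singleton] at hdvd2; exact hdvd2
        have hv0mem : v0 ∈ G.neighborSet w \ (S : Set V) := by
          rw [hv0]; exact rfl
        obtain ⟨hv0adj, hv0nS⟩ := hv0mem
        have hv0V1u : v0 ∈ V1u G V2 u := hwclos v0 hv0adj
        have hv0S : v0 ∈ S := by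
          rw [hSdef, Finset.mem_filter]
          refine ⟨(hBfin.mem_toFinset).2 hv0V1u, ?_⟩
          have h6 := hmmz v0
          have h8 : (n:ℤ) ∣ ((mm v0 : ℕ) : ℤ) := by rw [h6]; exact hdvdv0
          exact_mod_cast h8
        exact hv0nS (Finset.mem_coe.2 hv0S)
      · refine le_trans hδ2 (Set.ncard_le_ncard ?_ (Set.toFinite _))
        rintro z ⟨hzadj, hzV2⟩
        refine ⟨hzadj, fun hzS => ?_⟩
        have hzBf : z ∈ Bf := (Finset.mem_filter.1 (Finset.mem_coe.1 hzS)).1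
        have hzV1u := (hBfin.mem_toFinset).1 hzBf
        have hzne : z ≠ u := (G.ne_of_adj hzadj).symm
        exact (hclos z hzV1u hzne).1 hzV2
  obtain ⟨p, hp1, hp2⟩ := part4 Bf mm (fun v _ => hmmpos v) (fun v => (deg G v : ℤ) - 2) he
  refine ⟨mm, fun v _ => hbullet1 v, fun v _ => hmmpos v, p, ?_, ?_⟩
  · rw [← hBcoe, finprod_mem_coe_finset]
    exact hp1
  · rw [← hBcoe, finsum_mem_coe_finset]
    exact hp2
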